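/- arXiv:1605.08924 — 2 statements merged into one kernel-verified Lean document; each statement's English description precedes it below -/
import Mathlib

section
/- Let 𝓗 be a complex Hilbert space and A : 𝓗 → 𝓗 a continuous linear operator that possesses a Hilbert basis (complete orthonormal family) consisting of eigenvectors of A. Let P be a nonzero orthogonal projection on 𝓗 commuting with A (A ∘ P = P ∘ A). Then there exists a nonzero vector v in the range of P and a scalar λ with A v = λ v; i.e. A has at least one eigenvector in the range of P. (Existence part of the Cyclic Bloch Theorem: the Hamiltonian has at least one eigenvector in every symmetry subspace V^ν.) -/
open ContinuousLinearMap

/-- existence part of the Cyclic Bloch Theorem: let `A` be a continuous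
linear operator on a complex Hilbert space possessing a Hilbert basis of eigenvectors,
and let `P` be a nonzero orthogonal projection (idempotent and self-adjoint) commuting
with `A`. Then `A` has at least one (nonzero) eigenvector lying in the range of `P`. -/
theorem exists_eigenvector_in_range_of_commuting_projection
    {H : Type*} [NormedAddCommGroup H] [InnerProductSpace ℂ H] [CompleteSpace H]
    (A : H →L[ℂ] H)
    (hbasis : ∃ (ι : Type) (b : HilbertBasis ι ℂ H) (μ : ι → ℂ),
      ∀ i : ι, A (b i) = μ i • b i)
    (P : H →L[ℂ] H) (hidem : P ∘L P = P) (hsa : IsSelfAdjoint P) (hP : P ≠ 0)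
    (hcomm : A ∘L P = P ∘L A) :
    ∃ v ∈ LinearMap.range (P : H →ₗ[ℂ] H), v ≠ 0 ∧ ∃ lam : ℂ, A v = lam • v := by
  obtain ⟨ι, b, μ, hμ⟩ := hbasis
  have hex : ∃ i, P (b i) ≠ 0 := by
    by_contra h
    push_neg at h
    apply hP
    have hd : Dense (Submodule.span ℂ (Set.range (b : ι → H)) : Set H) := by
      rw [Submodule.dense_iff_topologicalClosure_eq_top]
      exact b.dense_span
    apply ContinuousLinearMap.ext_on hd
    rintro x ⟨i, rfl⟩
    simpa using h i
  obtain ⟨i, hi⟩ := hex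
  refine ⟨P (b i), ⟨b i, rfl⟩, hi, μ i, ?_⟩
  have : A (P (b i)) = P (A (b i)) := by
    simpa using DFunLike.congr_fun hcomm (b i)
  rw [this, hμ i, map_smul]
end

section
/- Let η : ℝ → ℝ be continuously differentiable and vanishing outside a bounded interval, let u : ℝ → ℝ be bounded measurable, and let W : ℝ³ → ℝ be bounded measurable and invariant under the cyclic group (W(R^γ x) = W(x) for all γ, x). Define the Hellmann–Feynman force field F(y) = ∫_{ℝ³} ∇_x [η(|x − y|)] · (W(x) − u(|x − y|)) dx (a vector-valued integral over x, with the gradient taken in x). Then F is rotation-equivariant with respect to the cyclic group: F(R^γ y) = R^γ F(y) for every γ ∈ ℤ/Nℤ and y ∈ ℝ³; hence the force on any atom of the cyclic structure is determined by the force on the corresponding atom in the fundamental domain. -/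
open Matrix MeasureTheory

/-- The rotation by angle `2πγ/N` about the `e₃`-axis. -/
noncomputable def Rmat (N : ℕ) (γ : ZMod N) : Matrix (Fin 3) (Fin 3) ℝ :=
  !![Real.cos (2 * Real.pi * γ.val / N), -Real.sin (2 * Real.pi * γ.val / N), 0;
     Real.sin (2 * Real.pi * γ.val / N),  Real.cos (2 * Real.pi * γ.val / N), 0;
     0, 0, 1]

/-- The rotation `R^γ`, acting on Euclidean space `ℝ³`. -/
noncomputable def rot (N : ℕ) (γ : ZMod N) :
    EuclideanSpace ℝ (Fin 3) →ₗ[ℝ] EuclideanSpace ℝ (Fin 3) :=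
  Matrix.toEuclideanLin (Rmat N γ)

lemma rot_norm (N : ℕ) (γ : ZMod N) (x : EuclideanSpace ℝ (Fin 3)) :
    ‖rot N γ x‖ = ‖x‖ := by
  have h0 : (rot N γ x) 0 = Real.cos (2 * Real.pi * γ.val / N) * x 0
      - Real.sin (2 * Real.pi * γ.val / N) * x 1 := by
    simp [rot, Rmat, Matrix.toEuclideanLin_apply, Matrix.mulVec, dotProduct,
      Fin.sum_univ_three]
    ring
  have h1 : (rot N γ x) 1 = Real.sin (2 * Real.pi * γ.val / N) * x 0
      + Real.cos (2 * Real.pi * γ.val / N) * x 1 := by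
    simp [rot, Rmat, Matrix.toEuclideanLin_apply, Matrix.mulVec, dotProduct,
      Fin.sum_univ_three]
  have h2 : (rot N γ x) 2 = x 2 := by
    simp [rot, Rmat, Matrix.toEuclideanLin_apply, Matrix.mulVec, dotProduct,
      Fin.sum_univ_three]
  rw [EuclideanSpace.norm_eq, EuclideanSpace.norm_eq]
  congr 1
  rw [Fin.sum_univ_three, Fin.sum_univ_three, h0, h1, h2]
  have := Real.sin_sq_add_cos_sq (2 * Real.pi * γ.val / N)
  simp only [Real.norm_eq_abs, sq_abs]
  nlinarith [this]

noncomputable def rotIso (N : ℕ) (γ : ZMod N) :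
    EuclideanSpace ℝ (Fin 3) ≃ₗᵢ[ℝ] EuclideanSpace ℝ (Fin 3) :=
  LinearIsometry.toLinearIsometryEquiv ⟨rot N γ, rot_norm N γ⟩ rfl

lemma rotIso_apply (N : ℕ) (γ : ZMod N) (x : EuclideanSpace ℝ (Fin 3)) :
    rotIso N γ x = rot N γ x := rfl

open InnerProductSpace in
lemma gradient_comp_isoEquiv {E : Type*} [NormedAddCommGroup E] [InnerProductSpace ℝ E]
    [CompleteSpace E] (e : E ≃ₗᵢ[ℝ] E) (f : E → ℝ) (x : E) :
    gradient (f ∘ e) x = e.symm (gradient f (e x)) := by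
  by_cases hd : DifferentiableAt ℝ f (e x)
  · have heL : HasFDerivAt (⇑e) (e.toContinuousLinearEquiv : E →L[ℝ] E) x :=
      e.toContinuousLinearEquiv.hasFDerivAt
    have hcomp : HasFDerivAt (f ∘ e)
        ((fderiv ℝ f (e x)).comp (e.toContinuousLinearEquiv : E →L[ℝ] E)) x :=
      hd.hasFDerivAt.comp x heL
    rw [gradient, hcomp.fderiv, gradient]
    apply ext_inner_right (𝕜 := ℝ)
    intro v
    rw [toDual_symm_apply]
    have : ⟪e.symm ((toDual ℝ E).symm (fderiv ℝ f (e x))), v⟫_ℝ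
        = ⟪(toDual ℝ E).symm (fderiv ℝ f (e x)), e v⟫_ℝ := by
      rw [← e.inner_map_map, e.apply_symm_apply]
    rw [this, toDual_symm_apply]
    rfl
  · have hd' : ¬ DifferentiableAt ℝ (f ∘ e) x := by
      intro h
      have : DifferentiableAt ℝ ((f ∘ e) ∘ e.symm) (e x) := by
        have h2 : DifferentiableAt ℝ (f ∘ ⇑e) (e.symm (e x)) := by simpa using h
        exact h2.comp (e x) e.symm.toContinuousLinearEquiv.differentiableAt
      apply hd
      convert this using 1
      ext z; simp
    rw [gradient_eq_zero_of_not_differentiableAt hd,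
      gradient_eq_zero_of_not_differentiableAt hd', map_zero]


/-- equivariance of the Hellmann–Feynman force: with `η` a `C¹` radial
pseudocharge profile vanishing outside a bounded interval, `u` bounded measurable, and
`W` bounded measurable and invariant under the cyclic group, the force field
`F(y) = ∫ ∇_x[η(|x-y|)] (W(x) - u(|x-y|)) dx` satisfies `F(R^γ y) = R^γ F(y)`. -/
theorem hellmannFeynman_force_equivariant (N : ℕ) [NeZero N]
    (η : ℝ → ℝ) (hη : ContDiff ℝ 1 η) (r₀ : ℝ)
    (hηsupp : ∀ r : ℝ, r ∉ Set.Icc 0 r₀ → η r = 0)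
    (u : ℝ → ℝ) (humeas : Measurable u) (hubd : ∃ C : ℝ, ∀ r, |u r| ≤ C)
    (W : EuclideanSpace ℝ (Fin 3) → ℝ)
    (hWmeas : Measurable W) (hWbd : ∃ C : ℝ, ∀ x, |W x| ≤ C)
    (hWinv : ∀ (γ : ZMod N) (x : EuclideanSpace ℝ (Fin 3)), W (rot N γ x) = W x)
    (γ : ZMod N) (y : EuclideanSpace ℝ (Fin 3)) :
    (∫ x : EuclideanSpace ℝ (Fin 3),
        (W x - u ‖x - rot N γ y‖) • gradient (fun z => η ‖z - rot N γ y‖) x)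
      = rot N γ (∫ x : EuclideanSpace ℝ (Fin 3),
          (W x - u ‖x - y‖) • gradient (fun z => η ‖z - y‖) x) := by
  set e := rotIso N γ with he
  have hnormsub : ∀ x : EuclideanSpace ℝ (Fin 3), ‖e x - rot N γ y‖ = ‖x - y‖ := by
    intro x
    have : e x - rot N γ y = e (x - y) := by
      rw [map_sub]; rfl
    rw [this, e.norm_map]
  have key : ∀ x, gradient (fun z => η ‖z - rot N γ y‖) (e x)
      = e (gradient (fun z => η ‖z - y‖) x) := by
    intro x
    have hcomp : (fun z => η ‖z - rot N γ y‖) ∘ e = fun z => η ‖z - y‖ := by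
      funext z
      simp only [Function.comp_apply]
      rw [hnormsub z]
    have h1 := gradient_comp_isoEquiv e (fun z => η ‖z - rot N γ y‖) x
    rw [hcomp] at h1
    rw [h1, LinearIsometryEquiv.apply_symm_apply]
  have hmp : MeasurePreserving e volume volume := e.measurePreserving
  have hcv := hmp.integral_comp (e.toHomeomorph.measurableEmbedding)
      (fun x => (W x - u ‖x - rot N γ y‖) • gradient (fun z => η ‖z - rot N γ y‖) x)
  rw [← hcv]
  set L := e.toLinearIsometry.toContinuousLinearMap with hLdef
  have hLcoe : ⇑L = ⇑e := by
    rw [hLdef, LinearIsometry.coe_toContinuousLinearMap,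
      LinearIsometryEquiv.coe_toLinearIsometry]
  have hL : ∀ x : EuclideanSpace ℝ (Fin 3),
      (W (e x) - u ‖e x - rot N γ y‖) • gradient (fun z => η ‖z - rot N γ y‖) (e x)
      = L ((W x - u ‖x - y‖) • gradient (fun z => η ‖z - y‖) x) := by
    intro x
    have hW : W (e x) = W x := hWinv γ x
    rw [key x, hW, hnormsub x, _root_.map_smul, hLcoe]
  simp only [hL]
  have hanti : AntilipschitzWith 1 ⇑L := by
    rw [hLcoe]; exact e.isometry.antilipschitz
  rw [ContinuousLinearMap.integral_comp_comm' L hanti]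
  rw [hLcoe]
  rfl
end
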